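/- Let f be a continuous piecewise linear function on [-r, r] with distinct roots a_μ and poles b_ν in (-r, r). Then f(0) = (1/2)(f(r)+f(-r)) - (1/2) ∑_{|a_μ|<r} τ_f(a_μ)(r - |a_μ|) + (1/2) ∑_{|b_ν|<r} τ_f(b_ν)(r - |b_ν|). -/

import Mathlib

open Set

/-- `f` is tropical meromorphic: continuous, piecewise linear with one-sided
slopes around every point, and `ω x` is the jump of the derivative at `x`
(right slope minus left slope); the jump points are discrete. -/
structure TropicalMero (f : ℝ → ℝ) (ω : ℝ → ℝ) : Prop where
  cont : Continuous f
  slopes : ∀ x : ℝ, ∃ ε > 0, ∃ sl sr : ℝ,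
    (∀ y ∈ Set.Ioc (x - ε) x, f y = f x + sl * (y - x)) ∧
    (∀ y ∈ Set.Ico x (x + ε), f y = f x + sr * (y - x)) ∧
    sr - sl = ω x
  discrete : ∀ r : ℝ, 0 < r → (Function.support ω ∩ Set.Ioo (-r) r).Finite

/-- Tropical proximity function. -/
noncomputable def mfun (f : ℝ → ℝ) (r : ℝ) : ℝ :=
  (max (f r) 0 + max (f (-r)) 0) / 2

/-- Tropical counting function for poles (points with `ω b < 0`) in `(-r, r)`. -/
noncomputable def Nfun (ω : ℝ → ℝ) (r : ℝ) : ℝ :=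
  (1 / 2) * ∑ᶠ b ∈ {b : ℝ | b ∈ Set.Ioo (-r) r ∧ ω b < 0}, (-(ω b)) * (r - |b|)

/-- Tropical characteristic function. -/
noncomputable def Tfun (f ω : ℝ → ℝ) (r : ℝ) : ℝ := mfun f r + Nfun ω r



lemma affine_propagate (F : ℝ → ℝ) (hc : Continuous F) (a b : ℝ) (hab : a < b)
    (hF : ∀ x ∈ Ioo a b, ∃ ε > 0, ∃ s : ℝ, ∀ y ∈ Ioo (x - ε) (x + ε), F y = F x + s * (y - x))
    (sr : ℝ) (ha : ∃ ε > 0, ∀ y ∈ Ico a (a + ε), F y = F a + sr * (y - a)) :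
    ∀ y ∈ Icc a b, F y = F a + sr * (y - a) := by
  set A : Set ℝ := {x | x ∈ Icc a b ∧ ∀ y ∈ Icc a x, F y = F a + sr * (y - a)} with hA
  have haA : a ∈ A := by
    refine ⟨⟨le_refl a, hab.le⟩, fun y hy => ?_⟩
    have : y = a := le_antisymm hy.2 hy.1
    simp [this]
  have hbdd : BddAbove A := ⟨b, fun x hx => hx.1.2⟩
  set c := sSup A with hc'
  have hac : a ≤ c := le_csSup hbdd haA
  have hcb : c ≤ b := csSup_le ⟨a, haA⟩ (fun x hx => hx.1.2)
  -- F is affine on [a, c)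
  have hIco : ∀ y ∈ Ico a c, F y = F a + sr * (y - a) := by
    intro y hy
    obtain ⟨x, hxA, hyx⟩ := exists_lt_of_lt_csSup ⟨a, haA⟩ hy.2
    exact hxA.2 y ⟨hy.1, hyx.le⟩
  have hcA : c ∈ A := by
    refine ⟨⟨hac, hcb⟩, fun y hy => ?_⟩
    rcases lt_or_eq_of_le hy.2 with hyc | hyc
    · exact hIco y ⟨hy.1, hyc⟩
    · subst hyc
      rcases eq_or_lt_of_le hac with h1 | h1
      · simp [← h1]
      · -- continuity argument
        have hclosed : IsClosed {y : ℝ | F y = F a + sr * (y - a)} :=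
          isClosed_eq hc (continuous_const.add (continuous_const.mul (continuous_id.sub continuous_const)))
        have hsub : Ico a c ⊆ {y : ℝ | F y = F a + sr * (y - a)} := fun z hz => hIco z hz
        have hsub2 : Icc a c ⊆ {y : ℝ | F y = F a + sr * (y - a)} := by
          have := closure_minimal hsub hclosed
          rwa [closure_Ico (ne_of_lt h1)] at this
        exact hsub2 ⟨hac, le_refl _⟩
  -- c = b
  have hcbeq : c = b := by
    by_contra hne
    have hclt : c < b := lt_of_le_of_ne hcb hne
    -- find an extension beyond c
    have hext : ∃ x ∈ A, c < x := by
      rcases eq_or_lt_of_le hac with h1 | h1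
      · -- c = a : use ha
        obtain ⟨ε, hε, haff⟩ := ha
        refine ⟨min (a + ε / 2) b, ⟨⟨le_min (by linarith) hab.le, min_le_right _ _⟩, ?_⟩, ?_⟩
        · intro y hy
          have hy2 : y < a + ε := lt_of_le_of_lt (le_trans hy.2 (min_le_left _ _)) (by linarith)
          exact haff y ⟨hy.1, hy2⟩
        · rw [← h1]; exact lt_min (by linarith) (lt_of_le_of_lt hac hclt)
      · -- a < c < b
        obtain ⟨ε, hε, s, haff⟩ := hF c ⟨h1, hclt⟩
        -- s = sr, by comparing on the left
        have hs : s = sr := by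
          set y₀ := max a (c - ε/2) with hy₀
          have hy₀c : y₀ < c := max_lt h1 (by linarith)
          have h1' : F y₀ = F c + s * (y₀ - c) :=
            haff y₀ ⟨by have := le_max_right a (c - ε/2); simp only [hy₀]; linarith, by linarith⟩
          have h2' : F y₀ = F a + sr * (y₀ - a) := hIco y₀ ⟨le_max_left _ _, hy₀c⟩
          have h3' : F c = F a + sr * (c - a) := hcA.2 c ⟨hac, le_refl _⟩
          have : s * (y₀ - c) = sr * (y₀ - c) := by
            have := h1'.symm.trans h2'
            rw [h3'] at this; ring_nf at this ⊢; linarith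
          have hne' : y₀ - c ≠ 0 := by linarith
          exact mul_right_cancel₀ hne' this
        refine ⟨min (c + ε / 2) b, ⟨⟨le_min (by linarith) hab.le, min_le_right _ _⟩, ?_⟩, ?_⟩
        · intro y hy
          rcases le_or_gt y c with hyc | hyc
          · exact hcA.2 y ⟨hy.1, hyc⟩
          · have hy2 : y < c + ε := lt_of_le_of_lt (le_trans hy.2 (min_le_left _ _)) (by linarith)
            have := haff y ⟨by linarith, hy2⟩
            rw [this, hs, hcA.2 c ⟨hac, le_refl _⟩]; ring
        · exact lt_min (by linarith) hclt
    obtain ⟨x, hxA, hcx⟩ := hext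
    exact absurd (le_csSup hbdd hxA) (not_le.mpr hcx)
  intro y hy
  rw [hcbeq] at hcA
  exact hcA.2 y hy

lemma finset_sep (T : Finset ℝ) (x : ℝ) : ∃ δ > 0, ∀ a ∈ T, a ≠ x → δ ≤ |a - x| := by
  classical
  induction T using Finset.induction_on with
  | empty => exact ⟨1, one_pos, by simp⟩
  | @insert a' s' hnotmem ih =>
    obtain ⟨δ, hδ, hsep⟩ := ih
    by_cases hax : a' = x
    · exact ⟨δ, hδ, fun b hb hbx => by
        rcases Finset.mem_insert.mp hb with h | h
        · exact absurd (h.trans hax) hbx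
        · exact hsep b h hbx⟩
    · refine ⟨min δ |a' - x|, lt_min hδ (abs_pos.mpr (sub_ne_zero.mpr hax)), fun b hb hbx => ?_⟩
      rcases Finset.mem_insert.mp hb with h | h
      · subst h; exact min_le_right _ _
      · exact le_trans (min_le_left _ _) (hsep b h hbx)

lemma key (f ω : ℝ → ℝ) (hc : Continuous f)
    (hs : ∀ x : ℝ, ∃ ε > 0, ∃ sl sr : ℝ,
      (∀ y ∈ Ioc (x - ε) x, f y = f x + sl * (y - x)) ∧
      (∀ y ∈ Ico x (x + ε), f y = f x + sr * (y - x)) ∧ sr - sl = ω x)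
    (r : ℝ) (hr : 0 < r) (T : Finset ℝ)
    (hT : ∀ a : ℝ, a ∈ T ↔ (ω a ≠ 0 ∧ a ∈ Ioo 0 r))
    (sr0 : ℝ) (h0 : ∃ ε > 0, ∀ y ∈ Ico (0:ℝ) ε, f y = f 0 + sr0 * y) :
    f r = f 0 + sr0 * r + ∑ a ∈ T, ω a * (r - a) := by
  classical
  set C : ℝ → ℝ := fun y => ∑ a ∈ T, ω a * max (y - a) 0 with hC
  set F : ℝ → ℝ := fun y => f y - C y with hF
  have hCc : Continuous C := by
    apply continuous_finset_sum
    intro a _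
    exact continuous_const.mul ((continuous_id.sub continuous_const).max continuous_const)
  have hFc : Continuous F := hc.sub hCc
  have hT0 : ∀ a ∈ T, 0 < a ∧ a < r := fun a ha => by
    have := ((hT a).mp ha).2; exact ⟨this.1, this.2⟩
  -- right affinity of C
  have hCr : ∀ x δ, 0 < δ → (∀ a ∈ T, a ≠ x → δ ≤ |a - x|) →
      ∀ y ∈ Ico x (x + δ), C y = C x + (∑ a ∈ T.filter (fun a => a ≤ x), ω a) * (y - x) := by
    intro x δ hδ hsep y hy
    have hterm : ∀ a ∈ T, ω a * max (y - a) 0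
        = ω a * max (x - a) 0 + (if a ≤ x then ω a else 0) * (y - x) := by
      intro a ha
      by_cases hax : a ≤ x
      · rw [if_pos hax, max_eq_left (by linarith [hy.1] : (0:ℝ) ≤ y - a),
          max_eq_left (by linarith : (0:ℝ) ≤ x - a)]
        ring
      · push_neg at hax
        have hδa := hsep a ha (ne_of_gt hax)
        rw [abs_of_pos (by linarith : (0:ℝ) < a - x)] at hδa
        rw [if_neg (not_le.mpr hax), max_eq_right (by linarith [hy.2] : y - a ≤ 0),
          max_eq_right (by linarith : x - a ≤ 0)]
        ring
    calc C y = ∑ a ∈ T, (ω a * max (x - a) 0 + (if a ≤ x then ω a else 0) * (y - x)) :=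
          Finset.sum_congr rfl hterm
      _ = C x + (∑ a ∈ T.filter (fun a => a ≤ x), ω a) * (y - x) := by
          rw [Finset.sum_add_distrib, ← Finset.sum_mul, Finset.sum_filter]
  -- left affinity of C
  have hCl : ∀ x δ, 0 < δ → (∀ a ∈ T, a ≠ x → δ ≤ |a - x|) →
      ∀ y ∈ Ioc (x - δ) x, C y = C x + (∑ a ∈ T.filter (fun a => a < x), ω a) * (y - x) := by
    intro x δ hδ hsep y hy
    have hterm : ∀ a ∈ T, ω a * max (y - a) 0
        = ω a * max (x - a) 0 + (if a < x then ω a else 0) * (y - x) := by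
      intro a ha
      by_cases hax : a < x
      · have hδa := hsep a ha (ne_of_lt hax)
        rw [abs_of_neg (by linarith : a - x < 0)] at hδa
        rw [if_pos hax, max_eq_left (by linarith [hy.1] : (0:ℝ) ≤ y - a),
          max_eq_left (by linarith : (0:ℝ) ≤ x - a)]
        ring
      · push_neg at hax
        rw [if_neg (not_lt.mpr hax), max_eq_right (by linarith [hy.2] : y - a ≤ 0),
          max_eq_right (by linarith : x - a ≤ 0)]
        ring
    calc C y = ∑ a ∈ T, (ω a * max (x - a) 0 + (if a < x then ω a else 0) * (y - x)) :=
          Finset.sum_congr rfl hterm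
      _ = C x + (∑ a ∈ T.filter (fun a => a < x), ω a) * (y - x) := by
          rw [Finset.sum_add_distrib, ← Finset.sum_mul, Finset.sum_filter]
  -- interior affinity of F
  have hFaff : ∀ x ∈ Ioo 0 r, ∃ ε > 0, ∃ s : ℝ,
      ∀ y ∈ Ioo (x - ε) (x + ε), F y = F x + s * (y - x) := by
    intro x hx
    obtain ⟨ε, hε, sl, sr, hL, hR, hj⟩ := hs x
    obtain ⟨δ, hδ, hsep⟩ := finset_sep T x
    refine ⟨min ε δ, lt_min hε hδ, sr - ∑ a ∈ T.filter (fun a => a ≤ x), ω a, ?_⟩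
    have hsplit : ∑ a ∈ T.filter (fun a => a ≤ x), ω a
        = ∑ a ∈ T.filter (fun a => a < x), ω a + (if x ∈ T then ω x else 0) := by
      by_cases hxT : x ∈ T
      · have heq : T.filter (fun a => a ≤ x) = insert x (T.filter (fun a => a < x)) := by
          ext a
          simp only [Finset.mem_filter, Finset.mem_insert]
          constructor
          · rintro ⟨haT, hax⟩
            rcases lt_or_eq_of_le hax with h | h
            · exact Or.inr ⟨haT, h⟩
            · exact Or.inl h
          · rintro (h | ⟨haT, h⟩)
            · subst h; exact ⟨hxT, le_refl a⟩
            · exact ⟨haT, h.le⟩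
        rw [heq, Finset.sum_insert (by simp), if_pos hxT]
        ring
      · have heq : T.filter (fun a => a ≤ x) = T.filter (fun a => a < x) := by
          ext a
          simp only [Finset.mem_filter]
          constructor
          · rintro ⟨haT, hax⟩
            rcases lt_or_eq_of_le hax with h | h
            · exact ⟨haT, h⟩
            · exact absurd (h ▸ haT) hxT
          · rintro ⟨haT, hax⟩
            exact ⟨haT, hax.le⟩
        rw [heq, if_neg hxT]
        ring
    have hkey : sl - ∑ a ∈ T.filter (fun a => a < x), ω a
        = sr - ∑ a ∈ T.filter (fun a => a ≤ x), ω a := by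
      by_cases hxT : x ∈ T
      · rw [hsplit, if_pos hxT]; linarith
      · have hω : ω x = 0 := by
          by_contra h'
          exact hxT ((hT x).mpr ⟨h', hx⟩)
        rw [hsplit, if_neg hxT]
        linarith
    intro y hy
    rcases le_or_gt y x with hyx | hyx
    · have h1 := hL y ⟨by have := hy.1; have := min_le_left ε δ; linarith, hyx⟩
      have h2 := hCl x δ hδ hsep y ⟨by have := hy.1; have := min_le_right ε δ; linarith, hyx⟩
      show f y - C y = f x - C x + _ * (y - x)
      rw [h1, h2, ← hkey]
      ring
    · have h1 := hR y ⟨hyx.le, by have := hy.2; have := min_le_left ε δ; linarith⟩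
      have h2 := hCr x δ hδ hsep y ⟨hyx.le, by have := hy.2; have := min_le_right ε δ; linarith⟩
      show f y - C y = f x - C x + _ * (y - x)
      rw [h1, h2]
      ring
  -- starting slope of F at 0
  obtain ⟨ε0, hε0, h0aff⟩ := h0
  obtain ⟨δ0, hδ0, hsep0⟩ := finset_sep T 0
  have hC0 : C 0 = 0 := Finset.sum_eq_zero (fun a ha => by
    have := (hT0 a ha).1
    rw [max_eq_right (by linarith : (0:ℝ) - a ≤ 0)]
    ring)
  have hstart : ∃ ε > 0, ∀ y ∈ Ico (0:ℝ) (0 + ε), F y = F 0 + sr0 * (y - 0) := by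
    refine ⟨min ε0 δ0, lt_min hε0 hδ0, fun y hy => ?_⟩
    have hCy : C y = 0 := Finset.sum_eq_zero (fun a ha => by
      have h1 := (hT0 a ha).1
      have h2 := hsep0 a ha (ne_of_gt h1)
      rw [sub_zero, abs_of_pos h1] at h2
      have h3 : y < δ0 := by have := hy.2; have := min_le_right ε0 δ0; linarith
      rw [max_eq_right (by linarith : y - a ≤ 0)]
      ring)
    show f y - C y = f 0 - C 0 + sr0 * (y - 0)
    rw [hCy, hC0, h0aff y ⟨hy.1, by have := hy.2; have := min_le_left ε0 δ0; linarith⟩]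
    ring
  have hFr := affine_propagate F hFc 0 r hr hFaff sr0 hstart r ⟨hr.le, le_refl r⟩
  have hCrval : C r = ∑ a ∈ T, ω a * (r - a) := Finset.sum_congr rfl (fun a ha => by
    rw [max_eq_left (by linarith [(hT0 a ha).2] : (0:ℝ) ≤ r - a)])
  have hFr' : f r - C r = f 0 - C 0 + sr0 * (r - 0) := hFr
  rw [hCrval, hC0] at hFr'
  linarith

/-- Tropical Jensen formula (Poisson–Jensen at x = 0). -/
theorem stmt3 (f ω : ℝ → ℝ) (h : TropicalMero f ω) (r : ℝ) (hr : 0 < r) :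
    f 0 = (f r + f (-r)) / 2
      - (1 / 2) * ∑ᶠ a ∈ {a : ℝ | a ∈ Set.Ioo (-r) r ∧ 0 < ω a},
          ω a * (r - |a|)
      + (1 / 2) * ∑ᶠ b ∈ {b : ℝ | b ∈ Set.Ioo (-r) r ∧ ω b < 0},
          (-(ω b)) * (r - |b|) := by
  classical
  obtain ⟨ε0, hε0, sl0, sr0, hl0, hr0, hj0⟩ := h.slopes 0
  have hfin := h.discrete r hr
  set T : Finset ℝ := hfin.toFinset with hTdef
  have hTmem : ∀ a : ℝ, a ∈ T ↔ (ω a ≠ 0 ∧ a ∈ Ioo (-r) r) := by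
    intro a
    rw [hTdef, Set.Finite.mem_toFinset]
    rfl
  -- right half
  have hplus := key f ω h.cont h.slopes r hr (T.filter (fun a => 0 < a))
    (by
      intro a
      simp only [Finset.mem_filter, hTmem, Set.mem_Ioo]
      constructor
      · rintro ⟨⟨hω, _, h2⟩, ha⟩
        exact ⟨hω, ha, h2⟩
      · rintro ⟨hω, h1, h2⟩
        exact ⟨⟨hω, by linarith, h2⟩, h1⟩)
    sr0
    ⟨ε0, hε0, fun y hy => by
      have := hr0 y (by simpa using hy)
      simpa using this⟩
  -- left half via reflection
  have hsg : ∀ x : ℝ, ∃ ε > 0, ∃ sl sr : ℝ,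
      (∀ y ∈ Ioc (x - ε) x, (fun y => f (-y)) y = (fun y => f (-y)) x + sl * (y - x)) ∧
      (∀ y ∈ Ico x (x + ε), (fun y => f (-y)) y = (fun y => f (-y)) x + sr * (y - x)) ∧
      sr - sl = (fun y => ω (-y)) x := by
    intro x
    obtain ⟨ε, hε, sl, sr, hL, hR, hj⟩ := h.slopes (-x)
    refine ⟨ε, hε, -sr, -sl, fun y hy => ?_, fun y hy => ?_, by simp only; linarith⟩
    · have := hR (-y) ⟨by linarith [hy.2], by linarith [hy.1]⟩
      simp only at this ⊢
      rw [this]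
      ring
    · have := hL (-y) ⟨by linarith [hy.2], by linarith [hy.1]⟩
      simp only at this ⊢
      rw [this]
      ring
  have hminus := key (fun y => f (-y)) (fun y => ω (-y))
    (h.cont.comp continuous_neg) hsg r hr
    ((T.filter (fun a => a < 0)).image (fun a => -a))
    (by
      intro b
      simp only [Finset.mem_image, Finset.mem_filter, hTmem, Set.mem_Ioo]
      constructor
      · rintro ⟨a, ⟨⟨hω, h1, _⟩, h3⟩, rfl⟩
        exact ⟨by simpa using hω, by linarith, by linarith⟩
      · rintro ⟨hω, h1, h2⟩
        exact ⟨-b, ⟨⟨by simpa using hω, by linarith, by linarith⟩, by linarith⟩, by ring⟩)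
    (-sl0)
    ⟨ε0, hε0, fun y hy => by
      have := hl0 (-y) ⟨by simp only [zero_sub]; linarith [hy.2], by linarith [hy.1]⟩
      rw [neg_zero, this]
      ring⟩
  simp only [neg_zero] at hminus
  have himg : ∑ b ∈ (T.filter (fun a => a < 0)).image (fun a => -a),
      (fun y => ω (-y)) b * (r - b) = ∑ a ∈ T.filter (fun a => a < 0), ω a * (r + a) := by
    rw [Finset.sum_image (fun a _ b _ hab => neg_injective hab)]
    apply Finset.sum_congr rfl
    intro a _
    simp only [neg_neg]
    ring
  rw [himg] at hminus
  -- key facts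
  have hfr : f r = f 0 + sr0 * r + ∑ a ∈ T.filter (fun a => 0 < a), ω a * (r - a) := hplus
  have hfnr : f (-r) = f 0 + (-sl0) * r + ∑ a ∈ T.filter (fun a => a < 0), ω a * (r + a) :=
    hminus
  -- total sum split by sign of a
  have hzero : ∑ a ∈ (T.filter (fun a => ¬ 0 < a)).filter (fun a => ¬ a < 0),
      ω a * (r - |a|) = ω 0 * r := by
    have heq : (T.filter (fun a => ¬ 0 < a)).filter (fun a => ¬ a < 0)
        = T.filter (fun a => a = 0) := by
      ext a
      simp only [Finset.mem_filter, not_lt]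
      constructor
      · rintro ⟨⟨h1, h2⟩, h3⟩
        exact ⟨h1, le_antisymm h2 h3⟩
      · rintro ⟨h1, rfl⟩
        exact ⟨⟨h1, le_refl 0⟩, le_refl 0⟩
    rw [heq]
    by_cases h0T : (0:ℝ) ∈ T
    · have hsingle : T.filter (fun a => a = 0) = {0} := by
        ext a
        simp only [Finset.mem_filter, Finset.mem_singleton]
        exact ⟨fun h' => h'.2, fun h' => ⟨h' ▸ h0T, h'⟩⟩
      rw [hsingle, Finset.sum_singleton, abs_zero]
      ring
    · have hω0 : ω 0 = 0 := by
        by_contra h'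
        exact h0T ((hTmem 0).mpr ⟨h', Set.mem_Ioo.mpr ⟨by linarith, hr⟩⟩)
      have hempty : T.filter (fun a => a = 0) = ∅ := by
        ext a
        simp only [Finset.mem_filter, Finset.notMem_empty, iff_false, not_and]
        rintro h1 rfl
        exact h0T h1
      rw [hempty, Finset.sum_empty, hω0]
      ring
  have hnegpart : ∑ a ∈ (T.filter (fun a => ¬ 0 < a)).filter (fun a => a < 0),
      ω a * (r - |a|) = ∑ a ∈ T.filter (fun a => a < 0), ω a * (r + a) := by
    have heq : (T.filter (fun a => ¬ 0 < a)).filter (fun a => a < 0)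
        = T.filter (fun a => a < 0) := by
      ext a
      simp only [Finset.mem_filter, not_lt]
      exact ⟨fun h' => ⟨h'.1.1, h'.2⟩, fun h' => ⟨⟨h'.1, h'.2.le⟩, h'.2⟩⟩
    rw [heq]
    apply Finset.sum_congr rfl
    intro a ha
    have := (Finset.mem_filter.mp ha).2
    rw [abs_of_neg this]
    ring
  have hpospart : ∑ a ∈ T.filter (fun a => 0 < a), ω a * (r - |a|)
      = ∑ a ∈ T.filter (fun a => 0 < a), ω a * (r - a) := by
    apply Finset.sum_congr rfl
    intro a ha
    rw [abs_of_pos (Finset.mem_filter.mp ha).2]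
  have htotal : ∑ a ∈ T, ω a * (r - |a|)
      = ω 0 * r + ∑ a ∈ T.filter (fun a => 0 < a), ω a * (r - a)
        + ∑ a ∈ T.filter (fun a => a < 0), ω a * (r + a) := by
    rw [← Finset.sum_filter_add_sum_filter_not T (fun a => 0 < a) (fun a => ω a * (r - |a|)),
      ← Finset.sum_filter_add_sum_filter_not (T.filter (fun a => ¬ 0 < a)) (fun a => a < 0)
        (fun a => ω a * (r - |a|)),
      hzero, hnegpart, hpospart]
    ring
  -- finsum conversions
  have hset1 : {a : ℝ | a ∈ Set.Ioo (-r) r ∧ 0 < ω a}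
      = ↑(T.filter (fun a => 0 < ω a)) := by
    ext a
    simp only [Set.mem_setOf_eq, Finset.coe_filter, hTmem, Set.mem_setOf_eq]
    constructor
    · rintro ⟨h1, h2⟩
      exact ⟨⟨ne_of_gt h2, h1⟩, h2⟩
    · rintro ⟨⟨_, h1⟩, h2⟩
      exact ⟨h1, h2⟩
  have hset2 : {b : ℝ | b ∈ Set.Ioo (-r) r ∧ ω b < 0}
      = ↑(T.filter (fun a => ω a < 0)) := by
    ext a
    simp only [Set.mem_setOf_eq, Finset.coe_filter, hTmem, Set.mem_setOf_eq]
    constructor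
    · rintro ⟨h1, h2⟩
      exact ⟨⟨ne_of_lt h2, h1⟩, h2⟩
    · rintro ⟨⟨_, h1⟩, h2⟩
      exact ⟨h1, h2⟩
  rw [hset1, hset2, finsum_mem_coe_finset, finsum_mem_coe_finset]
  -- split T by sign of ω
  have hsign : ∑ a ∈ T.filter (fun a => 0 < ω a), ω a * (r - |a|)
      + ∑ a ∈ T.filter (fun a => ω a < 0), ω a * (r - |a|)
      = ∑ a ∈ T, ω a * (r - |a|) := by
    rw [← Finset.sum_filter_add_sum_filter_not T (fun a => 0 < ω a)
      (fun a => ω a * (r - |a|))]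
    congr 1
    apply Finset.sum_congr _ (fun _ _ => rfl)
    ext a
    simp only [Finset.mem_filter, not_lt]
    constructor
    · rintro ⟨h1, h2⟩
      exact ⟨h1, le_of_lt h2⟩
    · rintro ⟨h1, h2⟩
      exact ⟨h1, lt_of_le_of_ne h2 ((hTmem a).mp h1).1⟩
  have hnegsum : ∑ b ∈ T.filter (fun a => ω a < 0), (-(ω b)) * (r - |b|)
      = - ∑ b ∈ T.filter (fun a => ω a < 0), ω b * (r - |b|) := by
    rw [← Finset.sum_neg_distrib]
    apply Finset.sum_congr rfl
    intro a _
    ring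
  rw [hnegsum]
  have hmul : sr0 * r - sl0 * r = ω 0 * r := by
    rw [← sub_mul, hj0]
  linarith [htotal, hsign, hfr, hfnr, hmul]
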